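/- Let F(z) = ₚF_q(α₁,…,αₚ; γ₁,…,γ_q; z). Then for every natural number n, ₚF_q(α₁+n, α₂,…,αₚ; γ₁,…,γ_q; z) = Σ_{k=0}^n [C(n,k)/(α₁)_k] · z^k F^{(k)}(z), where C(n,k) is the binomial coefficient and (α₁)_k the Pochhammer symbol. -/

import Mathlib

/-- Pochhammer symbol `(x)_k` (rising factorial). -/
noncomputable def ascp (x : ℂ) (k : ℕ) : ℂ := (ascPochhammer ℂ k).eval x

/-- The generalized hypergeometric function `ₚF_q(a; b; z)` as a formal power series:
its `k`-th coefficient is `(a₁)_k ⋯ (aₚ)_k / ((b₁)_k ⋯ (b_q)_k k!)`. -/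
noncomputable def pFq (a b : List ℂ) : PowerSeries ℂ :=
  PowerSeries.mk fun k =>
    (a.map fun x => ascp x k).prod / ((b.map fun x => ascp x k).prod * (Nat.factorial k : ℂ))

section Helpers
open PowerSeries
lemma ascp_zero (x : ℂ) : ascp x 0 = 1 := by simp [ascp]

lemma ascp_succ_right (x : ℂ) (k : ℕ) : ascp x (k + 1) = ascp x k * (x + k) := by
  simp [ascp, ascPochhammer_succ_right]

lemma ascp_succ_left (x : ℂ) (k : ℕ) : ascp x (k + 1) = x * ascp (x + 1) k := by
  simp [ascp, ascPochhammer_succ_left, Polynomial.eval_comp]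

lemma ascp_ne_zero (α₁ : ℂ) (hα : ∀ m : ℕ, α₁ ≠ -(m : ℂ)) (k : ℕ) : ascp α₁ k ≠ 0 := by
  induction k with
  | zero => simp [ascp_zero]
  | succ k ih =>
      rw [ascp_succ_right]
      refine mul_ne_zero ih ?_
      intro h
      exact hα k (by linear_combination h)

lemma add_nat_ne_zero (α₁ : ℂ) (hα : ∀ m : ℕ, α₁ ≠ -(m : ℂ)) (k : ℕ) : α₁ + k ≠ 0 := by
  intro h; exact hα k (by linear_combination h)

lemma derivativeFun_X' : (PowerSeries.X : PowerSeries ℂ).derivativeFun = 1 := by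
  exact PowerSeries.derivative_X

lemma X_mul_derivativeFun_X_pow (k : ℕ) :
    (PowerSeries.X : PowerSeries ℂ) * (PowerSeries.X ^ k).derivativeFun
      = PowerSeries.C (k : ℂ) * PowerSeries.X ^ k := by
  induction k with
  | zero => simp [pow_zero, derivativeFun_one]
  | succ k ih =>
      rw [pow_succ, derivativeFun_mul, derivativeFun_X']
      simp only [smul_eq_mul, mul_one]
      push_cast
      rw [map_add, map_one]
      linear_combination (PowerSeries.X : PowerSeries ℂ) * ih

lemma coeff_pFq_cons (a : ℂ) (αs γs : List ℂ) (m : ℕ) :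
    PowerSeries.coeff m (pFq (a :: αs) γs)
      = ascp a m * ((αs.map fun x => ascp x m).prod
          / ((γs.map fun x => ascp x m).prod * (Nat.factorial m : ℂ))) := by
  simp [pFq, PowerSeries.coeff_mk, mul_div_assoc]

lemma contiguous (a : ℂ) (ha : a ≠ 0) (αs γs : List ℂ) :
    pFq ((a + 1) :: αs) γs
      = pFq (a :: αs) γs
        + PowerSeries.C a⁻¹ * (PowerSeries.X * (pFq (a :: αs) γs).derivativeFun) := by
  ext m
  rw [map_add, coeff_pFq_cons, coeff_pFq_cons]
  rcases m with _ | m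
  · simp [ascp_zero]
  · rw [PowerSeries.coeff_C_mul, PowerSeries.coeff_succ_X_mul]
    erw [coeff_derivativeFun]
    rw [coeff_pFq_cons]
    have key : a * ascp (a + 1) (m + 1) = ascp a (m + 1) * (a + ((m : ℂ) + 1)) := by
      rw [← ascp_succ_left, ascp_succ_right]; push_cast; ring
    set A := (αs.map fun x => ascp x (m+1)).prod
        / ((γs.map fun x => ascp x (m+1)).prod * (Nat.factorial (m+1) : ℂ)) with hA
    field_simp
    push_cast
    linear_combination A * key

lemma derivativeFun_zero' : (0 : PowerSeries ℂ).derivativeFun = 0 := by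
  exact (PowerSeries.derivative ℂ).map_zero

lemma derivativeFun_sum (s : Finset ℕ) (f : ℕ → PowerSeries ℂ) :
    (∑ k ∈ s, f k).derivativeFun = ∑ k ∈ s, (f k).derivativeFun := by
  classical
  induction s using Finset.induction with
  | empty => simp [derivativeFun_zero']
  | insert _ _ h ih => rw [Finset.sum_insert h, Finset.sum_insert h,
      PowerSeries.derivativeFun_add, ih]

lemma term_deriv (c : ℂ) (k : ℕ) (G : PowerSeries ℂ) :
    PowerSeries.X * (PowerSeries.C c * PowerSeries.X ^ k * G).derivativeFun
      = PowerSeries.C (c * k) * PowerSeries.X ^ k * G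
        + PowerSeries.C c * PowerSeries.X ^ (k + 1) * G.derivativeFun := by
  rw [mul_assoc, PowerSeries.derivativeFun_mul]
  rw [show (PowerSeries.C c).derivativeFun = 0 from PowerSeries.derivativeFun_C]
  rw [PowerSeries.derivativeFun_mul]
  simp only [smul_eq_mul, mul_zero, add_zero, map_mul]
  push_cast
  linear_combination PowerSeries.C c * G * X_mul_derivativeFun_X_pow k

lemma natkey (n k : ℕ) :
    (k + 1) * (n.choose k + n.choose (k + 1)) = (n + 1) * n.choose k := by
  rw [← Nat.choose_succ_succ, mul_comm]
  simpa [Nat.succ_eq_add_one] using (Nat.add_one_mul_choose_eq n k).symm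

lemma scalar_step (α₁ : ℂ) (hα : ∀ m : ℕ, α₁ ≠ -(m : ℂ)) (n k : ℕ) :
    (((n + 1).choose (k + 1) : ℕ) : ℂ) / ascp α₁ (k + 1)
      = ((n.choose (k + 1) : ℕ) : ℂ) / ascp α₁ (k + 1)
          * (1 + (α₁ + n)⁻¹ * ((k : ℂ) + 1))
        + (α₁ + n)⁻¹ * (((n.choose k : ℕ) : ℂ) / ascp α₁ k) := by
  have he := ascp_ne_zero α₁ hα
  have h1 : α₁ + n ≠ 0 := add_nat_ne_zero α₁ hα n
  have h2 : α₁ + k ≠ 0 := add_nat_ne_zero α₁ hα k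
  have hsucc : ascp α₁ (k + 1) = ascp α₁ k * (α₁ + k) := ascp_succ_right α₁ k
  have hP : (((n + 1).choose (k + 1) : ℕ) : ℂ)
      = ((n.choose k : ℕ) : ℂ) + ((n.choose (k + 1) : ℕ) : ℂ) := by
    rw [Nat.choose_succ_succ]; push_cast; ring
  have hS : ((k : ℂ) + 1) * (((n.choose k : ℕ) : ℂ) + ((n.choose (k + 1) : ℕ) : ℂ))
      = ((n : ℂ) + 1) * ((n.choose k : ℕ) : ℂ) := by
    exact_mod_cast congrArg (Nat.cast : ℕ → ℂ) (natkey n k)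
  have hmul : (((n + 1).choose (k + 1) : ℕ) : ℂ) * (α₁ + n)
      = ((n.choose (k + 1) : ℕ) : ℂ) * (α₁ + n + k + 1)
        + ((n.choose k : ℕ) : ℂ) * (α₁ + k) := by
    linear_combination (α₁ + (n : ℂ)) * hP - hS
  have hek := he k
  have hek1 := he (k + 1)
  rw [hsucc]
  field_simp
  linear_combination hmul

lemma sum_shift (v : ℕ → PowerSeries ℂ) (a b e : ℕ → ℂ) (n : ℕ)
    (h0 : e 0 = a 0) (hs : ∀ k, e (k + 1) = a (k + 1) + b k) (ha : a (n + 1) = 0) :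
    ∑ k ∈ Finset.range (n + 1),
        (PowerSeries.C (a k) * v k + PowerSeries.C (b k) * v (k + 1))
      = ∑ k ∈ Finset.range (n + 2), PowerSeries.C (e k) * v k := by
  rw [Finset.sum_add_distrib,
    Finset.sum_range_succ' (fun k => PowerSeries.C (e k) * v k) (n + 1),
    show (∑ k ∈ Finset.range (n + 1), PowerSeries.C (a k) * v k)
        = ∑ k ∈ Finset.range (n + 2), PowerSeries.C (a k) * v k by
      rw [Finset.sum_range_succ (fun k => PowerSeries.C (a k) * v k) (n + 1), ha]; simp,
    Finset.sum_range_succ' (fun k => PowerSeries.C (a k) * v k) (n + 1),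
    add_right_comm, ← Finset.sum_add_distrib]
  congr 1
  · refine Finset.sum_congr rfl fun k _ => ?_
    rw [hs k, map_add, add_mul]
  · rw [h0]


end Helpers

/-- `ₚF_q(α₁+n, α₂,…; γ; z) = Σ_{k=0}^n C(n,k)/(α₁)_k · z^k F⁽ᵏ⁾(z)`. -/
theorem pFq_shift_as_derivatives (α₁ : ℂ) (αs γs : List ℂ)
    (hα : ∀ m : ℕ, α₁ ≠ -(m : ℂ)) (hγ : ∀ γ ∈ γs, ∀ m : ℕ, γ ≠ -(m : ℂ)) (n : ℕ) :
    pFq ((α₁ + n) :: αs) γs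
      = ∑ k ∈ Finset.range (n + 1),
          PowerSeries.C ((n.choose k : ℂ) / ascp α₁ k) * PowerSeries.X ^ k
            * (PowerSeries.derivativeFun)^[k] (pFq (α₁ :: αs) γs) := by
  induction n with
  | zero => simp [ascp_zero]
  | succ n ih =>
      have hne : α₁ + (n : ℂ) ≠ 0 := add_nat_ne_zero α₁ hα n
      have h1 : α₁ + ((n + 1 : ℕ) : ℂ) = α₁ + (n : ℂ) + 1 := by push_cast; ring
      rw [h1, contiguous (α₁ + (n : ℂ)) hne αs γs, ih, derivativeFun_sum,
        Finset.mul_sum, Finset.mul_sum, ← Finset.sum_add_distrib]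
      have key := sum_shift
        (fun k => PowerSeries.X ^ k * (PowerSeries.derivativeFun)^[k] (pFq (α₁ :: αs) γs))
        (fun k => ((n.choose k : ℕ) : ℂ) / ascp α₁ k * (1 + (α₁ + (n : ℂ))⁻¹ * (k : ℂ)))
        (fun k => (α₁ + (n : ℂ))⁻¹ * (((n.choose k : ℕ) : ℂ) / ascp α₁ k))
        (fun k => (((n + 1).choose k : ℕ) : ℂ) / ascp α₁ k) n
        (by norm_num [ascp_zero])
        (by intro k; push_cast; exact scalar_step α₁ hα n k)
        (by simp [Nat.choose_succ_self])
      refine Eq.trans (Finset.sum_congr rfl fun k hk => ?_) (key.trans ?_)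
      · rw [term_deriv, ← Function.iterate_succ_apply' PowerSeries.derivativeFun k (pFq (α₁ :: αs) γs)]
        simp only [map_mul, map_add, map_one]
        ring
      · exact Finset.sum_congr rfl fun k _ => (mul_assoc _ _ _).symm
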